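/- Let m, d, e, k be positive integers with e = gcd(m,d) = gcd(m,2d) and 2 ≤ k ≤ (m+e)/(2e), and let C be the Gold type code of relative dimension k, consisting of codewords c_{a⃗} = (Tr_{F_{2^e}/F_2}(Q_{a⃗}(π^{-i})))_{i=0}^{2^m-2} where π is a primitive element of F_{2^m} and Q_{a⃗}(x) = Tr_{F_{2^m}/F_{2^e}}(a_0 x) + Σ_{j=1}^{k-1} Tr_{F_{2^m}/F_{2^e}}(a_j x^{2^{jd}+1}) for a⃗ ∈ F_{2^m}^k. If c ∈ C is nonzero, then DC(c) ∈ {-1} ∪ {-1 ± 2^{(m+e)/2 + je} : j = 0, 1, ..., k-2}, where DC(c) = Σ_i (-1)^{c_i}. -/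

import Mathlib

open Finset

open Module


section ChiLemmas
lemma neg_one_pow_one_add (t : ZMod 2) : (-1 : ℤ) ^ ((1 + t).val) = -(-1 : ℤ) ^ t.val := by
  fin_cases t <;> decide

lemma zmod2_cases (t : ZMod 2) (h : t ≠ 0) : t = 1 := by revert t; decide

lemma char_sum {G : Type*} [AddCommGroup G] [Fintype G] (φ : G →+ ZMod 2) :
    (∑ x : G, (-1 : ℤ) ^ (φ x).val) = if ∀ x, φ x = 0 then (Fintype.card G : ℤ) else 0 := by
  split_ifs with h
  · simp [fun x => h x]
  · push_neg at h
    obtain ⟨x0, hx0⟩ := h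
    have h1 : φ x0 = 1 := zmod2_cases _ hx0
    have key : (∑ x : G, (-1 : ℤ) ^ (φ x).val) = ∑ x : G, (-1 : ℤ) ^ (φ (x0 + x)).val :=
      (Fintype.sum_equiv (Equiv.addLeft x0) _ _ (fun x => rfl)).symm
    have : (∑ x : G, (-1 : ℤ) ^ (φ x).val) = -∑ x : G, (-1 : ℤ) ^ (φ x).val := by
      nth_rewrite 1 [key]
      rw [← Finset.sum_neg_distrib]
      refine Finset.sum_congr rfl fun x _ => ?_
      rw [map_add, h1, neg_one_pow_one_add]
    linarith

end ChiLemmas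

section Skew

lemma abel_aux {R : Type*} [CommRing R] (c x : ℕ → R) :
    ∀ N : ℕ, ∑ i ∈ range (N+1), c i * x i
      = (∑ i ∈ range (N+1), c i) * x 0
        + ∑ i ∈ range N, (∑ j ∈ Finset.Ico (i+1) (N+1), c j) * (x (i+1) - x i) := by
  intro N
  induction N with
  | zero => simp
  | succ N IH =>
    have hsplit : ∀ i ∈ range (N+1), (∑ j ∈ Finset.Ico (i+1) (N+2), c j) * (x (i+1) - x i)
        = (∑ j ∈ Finset.Ico (i+1) (N+1), c j) * (x (i+1) - x i)
          + c (N+1) * (x (i+1) - x i) := by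
      intro i hi
      rw [Finset.mem_range] at hi
      rw [Finset.sum_Ico_succ_top (by omega : i + 1 ≤ N + 1)]
      ring
    rw [Finset.sum_congr rfl hsplit, Finset.sum_add_distrib]
    rw [Finset.sum_range_succ (fun i => (∑ j ∈ Finset.Ico (i+1) (N+1), c j) * (x (i+1) - x i))]
    rw [← Finset.mul_sum, Finset.sum_range_sub (fun i => x i)]
    rw [Finset.sum_range_succ c, Finset.sum_range_succ (fun i => c i * x i), IH]
    simp [Finset.Ico_self]
    ring

variable {F K : Type*} [Field F] [Field K] [Algebra F K] [FiniteDimensional F K]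

/-- The operator `∑ i, lmul (E i) ∘ σ^i` (degree window `range (n+1)`). -/
noncomputable def skewOp (σ : K ≃ₐ[F] K) (E : ℕ → K) (n : ℕ) : K →ₗ[F] K :=
  ∑ i ∈ range (n+1), ((Algebra.lmul F K) (E i)).comp (σ ^ i).toLinearMap

lemma skewOp_apply (σ : K ≃ₐ[F] K) (E : ℕ → K) (n : ℕ) (u : K) :
    skewOp σ E n u = ∑ i ∈ range (n+1), E i * (σ ^ i) u := by
  simp [skewOp, LinearMap.sum_apply]

lemma skew_kernel_bound (σ : K ≃ₐ[F] K)
    (hfix : ∀ x : K, σ x = x → ∃ lam : F, x = algebraMap F K lam) :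
    ∀ (n : ℕ) (E : ℕ → K), (¬ ∀ i ≤ n, E i = 0) →
    finrank F (LinearMap.ker (skewOp σ E n)) ≤ n := by
  intro n
  induction n with
  | zero =>
    intro E hE
    have hE0 : E 0 ≠ 0 := fun h => hE fun i hi => by rwa [Nat.le_zero.mp hi]
    have hker : LinearMap.ker (skewOp σ E 0) = ⊥ := by
      rw [LinearMap.ker_eq_bot']
      intro u hu
      rw [skewOp_apply] at hu
      rw [Finset.range_one, Finset.sum_singleton, pow_zero] at hu
      simpa [hE0] using hu
    rw [hker]; simp
  | succ n IH =>
    intro E hE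
    by_cases hkerbot : LinearMap.ker (skewOp σ E (n+1)) = ⊥
    · rw [hkerbot]; simp
    · obtain ⟨v, hvker, hv0⟩ := Submodule.exists_mem_ne_zero_of_ne_bot hkerbot
      rw [LinearMap.mem_ker, skewOp_apply] at hvker
      set c : ℕ → K := fun i => E i * (σ ^ i) v with hc
      have hsumc : ∑ i ∈ range (n+2), c i = 0 := hvker
      set r : ℕ → K := fun i => ∑ j ∈ Finset.Ico (i+1) (n+2), c j with hrdef
      have hcr : ∀ i ≤ n, c (i+1) = r i - r (i+1) := by
        intro i hi
        have h1 : r i = c (i+1) + r (i+1) :=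
          Finset.sum_eq_sum_Ico_succ_bot (by omega : i + 1 < n + 2) c
        rw [h1]; ring
      have hc0 : c 0 = - r 0 := by
        have h1 : ∑ j ∈ Finset.Ico 0 (n+2), c j = c 0 + r 0 :=
          Finset.sum_eq_sum_Ico_succ_bot (by omega : 0 < n + 2) c
        rw [← Finset.range_eq_Ico, hsumc] at h1
        linear_combination -h1
      have hrtop : r (n+1) = 0 := by
        rw [hrdef]; simp
      have hrne : ¬ ∀ i ≤ n, r i = 0 := by
        intro hall
        apply hE
        intro i hi
        have hcz : c i = 0 := by
          rcases Nat.eq_zero_or_pos i with rfl | hpos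
          · rw [hc0, hall 0 (by omega), neg_zero]
          · obtain ⟨i', rfl⟩ := Nat.exists_eq_add_of_le hpos
            rw [Nat.add_comm 1 i'] at hi ⊢
            rw [hcr i' (by omega), hall i' (by omega)]
            rcases Nat.lt_or_ge i' n with h | h
            · rw [hall (i'+1) (by omega), sub_zero]
            · have : i' = n := by omega
              rw [this, hrtop, sub_zero]
        rw [hc] at hcz
        simp only at hcz
        rcases mul_eq_zero.mp hcz with h | h
        · exact h
        · exact absurd h (by simpa using (σ ^ i).injective.ne hv0)
      -- multiplication by v as a linear equivalence
      have hvinv : v⁻¹ * v = 1 := inv_mul_cancel₀ hv0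
      set e : K ≃ₗ[F] K := LinearEquiv.ofLinear
          ((Algebra.lmul F K) v) ((Algebra.lmul F K) v⁻¹)
          (by ext u
              simp only [LinearMap.comp_apply, Algebra.coe_lmul_eq_mul, LinearMap.mul_apply', LinearMap.id_apply]
              rw [← mul_assoc, mul_inv_cancel₀ hv0, one_mul])
          (by ext u
              simp only [LinearMap.comp_apply, Algebra.coe_lmul_eq_mul, LinearMap.mul_apply', LinearMap.id_apply]
              rw [← mul_assoc, inv_mul_cancel₀ hv0, one_mul]) with he
      have heapp : ∀ u, e u = v * u := fun u => rfl
      have hPc_eq : skewOp σ c (n+1) = (skewOp σ E (n+1)).comp e.toLinearMap := by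
        ext u
        rw [LinearMap.comp_apply, LinearEquiv.coe_toLinearMap, heapp, skewOp_apply, skewOp_apply]
        refine Finset.sum_congr rfl fun i _ => ?_
        rw [hc]
        simp only [map_mul]
        ring
      have hkerPc : finrank F (LinearMap.ker (skewOp σ c (n+1)))
          = finrank F (LinearMap.ker (skewOp σ E (n+1))) := by
        rw [hPc_eq, LinearMap.ker_comp, Submodule.comap_equiv_eq_map_symm]
        exact (e.symm.submoduleMap _).finrank_eq.symm
      -- factorization through σ - 1
      have hfact : ∀ u, skewOp σ c (n+1) u = skewOp σ r n (σ u - u) := by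
        intro u
        rw [skewOp_apply, skewOp_apply]
        have habel := abel_aux c (fun i => (σ ^ i) u) (n+1)
        rw [hsumc, zero_mul, zero_add] at habel
        rw [habel]
        refine Finset.sum_congr rfl fun i _ => ?_
        rw [map_sub]
        have : (σ ^ (i+1)) u = (σ ^ i) (σ u) := by
          rw [pow_succ]
          rfl
        rw [← this]
      -- the connecting map
      set g : LinearMap.ker (skewOp σ c (n+1)) →ₗ[F] K :=
        (σ.toLinearMap - LinearMap.id).comp (LinearMap.ker (skewOp σ c (n+1))).subtype with hg
      have hgapp : ∀ u : LinearMap.ker (skewOp σ c (n+1)), g u = σ u.val - u.val := fun u => rfl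
      have hrange : LinearMap.range g ≤ LinearMap.ker (skewOp σ r n) := by
        rintro z ⟨u, rfl⟩
        rw [LinearMap.mem_ker, hgapp, ← hfact]
        exact u.2
      have hkerg : finrank F (LinearMap.ker g) ≤ 1 := by
        have hmap : Submodule.map (LinearMap.ker (skewOp σ c (n+1))).subtype (LinearMap.ker g)
            ≤ Submodule.span F {(1 : K)} := by
          rintro z ⟨u, hu, rfl⟩
          rw [SetLike.mem_coe, LinearMap.mem_ker, hgapp, sub_eq_zero] at hu
          obtain ⟨lam, hlam⟩ := hfix u.val hu
          rw [Submodule.mem_span_singleton]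
          refine ⟨lam, ?_⟩
          show lam • (1:K) = u.val
          rw [hlam, Algebra.algebraMap_eq_smul_one]
        calc finrank F (LinearMap.ker g)
            = finrank F (Submodule.map (LinearMap.ker (skewOp σ c (n+1))).subtype
                (LinearMap.ker g)) := (Submodule.finrank_map_subtype_eq _ _).symm
          _ ≤ finrank F (Submodule.span F {(1 : K)}) := Submodule.finrank_mono hmap
          _ = 1 := finrank_span_singleton one_ne_zero
      have hrn : finrank F (LinearMap.range g) ≤ n :=
        le_trans (Submodule.finrank_mono hrange) (IH r hrne)
      have hrk := LinearMap.finrank_range_add_finrank_ker g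
      rw [← hkerPc]
      omega

end Skew

section AltEven

universe uF uV

lemma alt_even_aux (F : Type uF) [Field F] :
    ∀ (n : ℕ) (V : Type uV) [AddCommGroup V] [Module F V] [FiniteDimensional F V],
    finrank F V = n → ∀ (B : V →ₗ[F] V →ₗ[F] F), (∀ v, B v v = 0) →
    Even (finrank F V - finrank F (LinearMap.ker B)) := by
  intro n
  induction n using Nat.strong_induction_on with
  | _ n IH =>
    intro V _ _ _ hn B halt
    have hskew : ∀ u v : V, B u v = -B v u := by
      intro u v
      have h := halt (u + v)
      simp only [map_add, LinearMap.add_apply, halt u, halt v] at h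
      linear_combination h
    by_cases hz : ∀ x y : V, B x y = 0
    · have hker : LinearMap.ker B = ⊤ := by
        rw [LinearMap.ker_eq_top]
        ext u v; simp [hz]
      rw [hker, finrank_top, Nat.sub_self]
      exact Even.zero
    · push_neg at hz
      obtain ⟨x, y, hxy⟩ := hz
      have hyx : B y x ≠ 0 := by rw [hskew]; simpa using hxy
      set U : Submodule F V := LinearMap.ker (B x) ⊓ LinearMap.ker (B y) with hU
      have hmemU : ∀ v : V, v ∈ U ↔ B x v = 0 ∧ B y v = 0 := by
        intro v; simp [hU, LinearMap.mem_ker]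
      have li : LinearIndependent F ![x, y] := by
        rw [LinearIndependent.pair_iff]
        intro s t hst
        have h1 : B y (s • x + t • y) = 0 := by rw [hst]; simp
        have h2 : B x (s • x + t • y) = 0 := by rw [hst]; simp
        simp only [map_add, map_smul, halt, smul_zero, add_zero, zero_add, smul_eq_mul,
          mul_zero] at h1 h2
        constructor
        · rcases mul_eq_zero.mp h1 with h | h
          · exact h
          · exact absurd h hyx
        · rcases mul_eq_zero.mp h2 with h | h
          · exact h
          · exact absurd h hxy
      have hrangeset : Set.range ![x, y] = {x, y} := by
        ext z
        constructor
        · rintro ⟨i, rfl⟩; fin_cases i <;> simp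
        · rintro (rfl | rfl)
          · exact ⟨0, rfl⟩
          · exact ⟨1, rfl⟩
      set P : Submodule F V := Submodule.span F (Set.range ![x, y]) with hP
      have hfrP : finrank F P = 2 := by
        rw [hP, finrank_span_eq_card li]
        simp
      have hPU : P ⊓ U = ⊥ := by
        rw [Submodule.eq_bot_iff]
        intro z hzm
        have hzP := hzm.1
        have hzU := hzm.2
        rw [hP, hrangeset] at hzP
        obtain ⟨s, t, rfl⟩ := Submodule.mem_span_pair.mp hzP
        simp only [SetLike.mem_coe] at hzU
        rw [hmemU] at hzU
        obtain ⟨h1, h2⟩ := hzU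
        simp only [map_add, map_smul, halt, smul_zero, add_zero, zero_add, smul_eq_mul,
          mul_zero] at h1 h2
        have ht : t = 0 := by
          rcases mul_eq_zero.mp h1 with h | h; exact h; exact absurd h hxy
        have hs : s = 0 := by
          rcases mul_eq_zero.mp h2 with h | h; exact h; exact absurd h hyx
        simp [ht, hs]
      have hPsup : P ⊔ U = ⊤ := by
        rw [Submodule.eq_top_iff']
        intro v
        obtain ⟨t, htdef⟩ : ∃ t : F, t = B x v / B x y := ⟨_, rfl⟩
        obtain ⟨s, hsdef⟩ : ∃ s : F, s = -(B y v) / B x y := ⟨_, rfl⟩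
        have hu : v - (s • x + t • y) ∈ U := by
          rw [hmemU]
          constructor
          · simp only [map_sub, map_add, map_smul, halt, smul_zero, zero_add, smul_eq_mul,
              mul_zero, add_zero]
            rw [htdef]; field_simp; ring
          · simp only [map_sub, map_add, map_smul, halt, smul_zero, add_zero, smul_eq_mul,
              mul_zero, zero_add]
            rw [hskew y x, hsdef]; field_simp; ring
        have hp : (s • x + t • y) ∈ P := by
          rw [hP, hrangeset]
          exact Submodule.mem_span_pair.mpr ⟨s, t, rfl⟩
        have hveq : v = (s • x + t • y) + (v - (s • x + t • y)) := by abel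
        rw [hveq]
        exact Submodule.add_mem_sup hp hu
      set BU : U →ₗ[F] U →ₗ[F] F := B.domRestrict₁₂ U U with hBU
      have haltU : ∀ u : U, BU u u = 0 := fun u => halt u
      have hkermap : Submodule.map U.subtype (LinearMap.ker BU) = LinearMap.ker B := by
        apply le_antisymm
        · rintro z ⟨⟨z', hz'U⟩, hz'ker, rfl⟩
          simp only [Submodule.coe_subtype]
          rw [SetLike.mem_coe, LinearMap.mem_ker] at hz'ker
          rw [LinearMap.mem_ker]
          ext v
          have hv : v ∈ P ⊔ U := hPsup ▸ Submodule.mem_top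
          obtain ⟨p, hp, u, hu, rfl⟩ := Submodule.mem_sup.mp hv
          rw [hP, hrangeset] at hp
          obtain ⟨s, t, rfl⟩ := Submodule.mem_span_pair.mp hp
          have hz'Um := (hmemU z').mp hz'U
          have hzu : B z' u = 0 := by
            simpa [hBU, LinearMap.domRestrict₁₂_apply] using LinearMap.congr_fun hz'ker ⟨u, hu⟩
          simp only [map_add, map_smul, smul_eq_mul, LinearMap.add_apply,
            LinearMap.zero_apply, LinearMap.smul_apply]
          rw [hskew z' x, hskew z' y, hz'Um.1, hz'Um.2, hzu]
          ring
        · intro z hz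
          rw [LinearMap.mem_ker] at hz
          have hzU : z ∈ U := by
            rw [hmemU]
            refine ⟨?_, ?_⟩
            · rw [hskew x z, hz]; simp
            · rw [hskew y z, hz]; simp
          refine ⟨⟨z, hzU⟩, ?_, rfl⟩
          rw [SetLike.mem_coe, LinearMap.mem_ker]
          ext u
          rw [hBU]
          simp only [LinearMap.domRestrict₁₂_apply, hz, LinearMap.zero_apply]
      have hfrker : finrank F (LinearMap.ker B) = finrank F (LinearMap.ker BU) := by
        rw [← hkermap, Submodule.finrank_map_subtype_eq]
      have hdim : finrank F U + 2 = n := by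
        have hh := Submodule.finrank_sup_add_finrank_inf_eq P U
        rw [hPU, hPsup, hfrP] at hh
        simp only [finrank_top, finrank_bot, add_zero] at hh
        omega
      have hUlt : finrank F U < n := by omega
      have hIH := IH (finrank F U) hUlt U rfl BU haltU
      have hle1 : finrank F (LinearMap.ker BU) ≤ finrank F U := Submodule.finrank_le _
      obtain ⟨r, hr⟩ := hIH
      rw [hn] at *
      rw [hfrker]
      exact ⟨r + 1, by omega⟩

end AltEven

section NumberTheory

lemma pow_cycle {K : Type*} [Monoid K] (u : K) (s : ℕ) (h : u ^ 2 ^ s = u) :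
    ∀ t : ℕ, u ^ 2 ^ (s * t) = u := by
  intro t
  induction t with
  | zero => simp
  | succ t IH =>
    have : 2 ^ (s * (t + 1)) = 2 ^ (s * t) * 2 ^ s := by
      rw [Nat.mul_succ, pow_add]
    rw [this, pow_mul, IH, h]

lemma bezout_nat (m d e : ℕ) (hd : 0 < d) (hm : 0 < m) (he : e = Nat.gcd m d) :
    ∃ x y : ℕ, 0 < x ∧ d * x = e + m * y := by
  have hgcd : (e : ℤ) = m * Nat.gcdA m d + d * Nat.gcdB m d := by
    rw [he]; exact_mod_cast Nat.gcd_eq_gcd_ab m d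
  set A := Nat.gcdA m d with hA
  set B := Nat.gcdB m d with hB
  set t : ℤ := |A| + |B| + 1 with ht
  have hm1 : (1 : ℤ) ≤ m := by exact_mod_cast hm
  have hd1 : (1 : ℤ) ≤ d := by exact_mod_cast hd
  have habsA := abs_nonneg A
  have habsB := abs_nonneg B
  have hBle := le_abs_self B
  have hBge := neg_abs_le B
  have hAle := le_abs_self A
  have ht1 : 0 < B + t * m := by
    have : t * 1 ≤ t * m := by
      apply mul_le_mul_of_nonneg_left hm1
      omega
    nlinarith
  have ht2 : 0 ≤ t * d - A := by
    have : t * 1 ≤ t * d := by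
      apply mul_le_mul_of_nonneg_left hd1
      omega
    nlinarith
  refine ⟨(B + t * m).toNat, (t * d - A).toNat, ?_, ?_⟩
  · have := Int.toNat_of_nonneg (le_of_lt ht1)
    omega
  · have hx : ((B + t * m).toNat : ℤ) = B + t * m := Int.toNat_of_nonneg (le_of_lt ht1)
    have hy : ((t * d - A).toNat : ℤ) = t * d - A := Int.toNat_of_nonneg ht2
    have key : (d : ℤ) * (B + t * m) = e + m * (t * d - A) := by linear_combination -hgcd
    have : (d : ℤ) * ((B + t * m).toNat) = e + m * ((t * d - A).toNat) := by
      rw [hx, hy]; exact key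
    exact_mod_cast this

lemma fixed_in_base {F K : Type*} [Field F] [Field K] [Algebra F K] [Fintype F] [Fintype K]
    {e : ℕ} (he : 0 < e) (hF : Fintype.card F = 2 ^ e) (u : K) (hu : u ^ 2 ^ e = u) :
    ∃ lam : F, u = algebraMap F K lam := by
  classical
  set S : Finset K := Finset.univ.image (algebraMap F K) with hS
  by_contra hcon
  push_neg at hcon
  have huS : u ∉ S := by
    intro h
    obtain ⟨lam, _, h2⟩ := Finset.mem_image.mp h
    exact hcon lam h2.symm
  set p : Polynomial K := Polynomial.X ^ (2 ^ e) - Polynomial.X with hp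
  have h2e : 1 < 2 ^ e := Nat.one_lt_two_pow_iff.mpr (by omega)
  have hpdeg : p.natDegree = 2 ^ e := by
    rw [hp, Polynomial.natDegree_sub_eq_left_of_natDegree_lt]
    · exact Polynomial.natDegree_X_pow _
    · rw [Polynomial.natDegree_X_pow, Polynomial.natDegree_X]
      omega
  have hppne : p ≠ 0 := by
    intro h
    rw [h, Polynomial.natDegree_zero] at hpdeg
    omega
  have hproots : ∀ z : K, z ^ 2 ^ e = z → p.IsRoot z := by
    intro z hz
    simp [hp, Polynomial.IsRoot, hz, sub_eq_zero]
  have hsub : insert u S ⊆ p.roots.toFinset := by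
    intro z hz
    rw [Multiset.mem_toFinset, Polynomial.mem_roots hppne]
    rcases Finset.mem_insert.mp hz with rfl | hzS
    · exact hproots z hu
    · obtain ⟨lam, _, rfl⟩ := Finset.mem_image.mp hzS
      apply hproots
      rw [← map_pow]
      congr 1
      rw [← hF]
      exact FiniteField.pow_card lam
  have hcard1 : (insert u S).card = 2 ^ e + 1 := by
    rw [Finset.card_insert_of_notMem huS, hS,
      Finset.card_image_of_injective _ (algebraMap F K).injective, Finset.card_univ, hF]
  have hcard2 : p.roots.toFinset.card ≤ 2 ^ e := by
    calc p.roots.toFinset.card ≤ Multiset.card p.roots := p.roots.toFinset_card_le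
      _ ≤ p.natDegree := p.card_roots'
      _ = 2 ^ e := hpdeg
  have := Finset.card_le_card hsub
  omega

end NumberTheory


set_option maxHeartbeats 2000000 in
open Finset Module in
/-- DC components of nonzero codewords of the Gold type code of relative
dimension `k` lie in `{-1} ∪ {-1 ± 2^{(m+e)/2 + je} : j = 0,…,k-2}`. -/
theorem gold_code_dc_values (m d e k : ℕ)
    (hm : 0 < m) (hd : 0 < d) (he : 0 < e)
    (he1 : e = Nat.gcd m d) (he2 : e = Nat.gcd m (2 * d))
    (hk1 : 2 ≤ k) (hk2 : k ≤ (m + e) / (2 * e))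
    (F K : Type*) [Field F] [Field K] [Algebra F K] [Fintype F] [Fintype K]
    [Algebra (ZMod 2) F]
    (hF : Fintype.card F = 2 ^ e) (hK : Fintype.card K = 2 ^ m)
    (π : K) (hπ : orderOf π = 2 ^ m - 1)
    (a : Fin k → K)
    (Q : K → F)
    (hQ : ∀ x, Q x = ∑ j : Fin k,
      (if (j : ℕ) = 0 then Algebra.trace F K (a j * x)
       else Algebra.trace F K (a j * x ^ (2 ^ ((j : ℕ) * d) + 1))))
    (c : Fin (2 ^ m - 1) → ZMod 2)
    (hc : ∀ i, c i = Algebra.trace (ZMod 2) F (Q (π⁻¹ ^ (i : ℕ))))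
    (hc0 : c ≠ 0) :
    (∑ i : Fin (2 ^ m - 1), (-1 : ℤ) ^ (c i).val) = -1 ∨
      ∃ j ≤ k - 2,
        (∑ i : Fin (2 ^ m - 1), (-1 : ℤ) ^ (c i).val) = -1 + 2 ^ ((m + e) / 2 + j * e) ∨
        (∑ i : Fin (2 ^ m - 1), (-1 : ℤ) ^ (c i).val) = -1 - 2 ^ ((m + e) / 2 + j * e) := by
  classical
  haveI : Fact (Nat.Prime 2) := ⟨Nat.prime_two⟩
  haveI hFchar : CharP F 2 := charP_of_injective_algebraMap (algebraMap (ZMod 2) F).injective 2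
  haveI hKchar : CharP K 2 := charP_of_injective_algebraMap (algebraMap F K).injective 2
  letI : Algebra (ZMod 2) K := ZMod.algebra K 2
  haveI : IsScalarTower (ZMod 2) F K := IsScalarTower.of_algebraMap_eq
    (fun x => (RingHom.congr_fun
      (Subsingleton.elim (algebraMap (ZMod 2) K)
        ((algebraMap F K).comp (algebraMap (ZMod 2) F))) x))
  haveI : Algebra.IsAlgebraic (ZMod 2) K := Algebra.IsAlgebraic.of_finite _ _
  haveI : Algebra.IsAlgebraic F K := Algebra.IsAlgebraic.of_finite _ _
  -- divisibility facts
  have hedvd_d : e ∣ d := by rw [he1]; exact Nat.gcd_dvd_right m d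
  have hedvd_m : e ∣ m := by rw [he1]; exact Nat.gcd_dvd_left m d
  have hexpF : ∀ l : F, l ^ 2 ^ e = l := fun l => by rw [← hF]; exact FiniteField.pow_card l
  have hexpK : ∀ x : K, x ^ 2 ^ m = x := fun x => by rw [← hK]; exact FiniteField.pow_card x
  have hfixF : ∀ s : ℕ, e ∣ s → ∀ l : F, l ^ 2 ^ s = l := by
    rintro s ⟨t, rfl⟩ l
    exact pow_cycle l e (hexpF l) t
  have hadd_pow : ∀ (s : ℕ) (x y : K), (x + y) ^ 2 ^ s = x ^ 2 ^ s + y ^ 2 ^ s := by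
    intro s x y
    have h := map_add (iterateFrobenius K 2 s) x y
    simpa [iterateFrobenius_def] using h
  -- Frobenius power as an F-algebra automorphism
  have hinjfrob : Function.Injective (fun x : K => x ^ 2 ^ d) := by
    intro x y hxy
    replace hxy : x ^ 2 ^ d = y ^ 2 ^ d := hxy
    have hsub : (x - y) ^ 2 ^ d = x ^ 2 ^ d - y ^ 2 ^ d := by
      have h := map_sub (iterateFrobenius K 2 d) x y
      simpa [iterateFrobenius_def] using h
    have h1 : (x - y) ^ 2 ^ d = 0 := by
      rw [hsub, hxy, sub_self]
    have h2 := pow_eq_zero_iff (n := 2 ^ d) (by positivity) |>.mp h1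
    exact sub_eq_zero.mp h2
  set σh : K →ₐ[F] K :=
    { toFun := fun x => x ^ 2 ^ d
      map_one' := one_pow _
      map_mul' := fun x y => mul_pow x y _
      map_zero' := zero_pow (by positivity)
      map_add' := fun x y => hadd_pow d x y
      commutes' := fun l => by
        show algebraMap F K l ^ 2 ^ d = algebraMap F K l
        rw [← map_pow, hfixF d hedvd_d l] } with hσh
  have hbijfrob : Function.Bijective σh := Finite.injective_iff_bijective.mp hinjfrob
  set σ : K ≃ₐ[F] K := AlgEquiv.ofBijective σh hbijfrob with hσdef
  have hσ : ∀ x : K, σ x = x ^ 2 ^ d := fun x => rfl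
  have hσpow : ∀ (t : ℕ) (x : K), (σ ^ t) x = x ^ 2 ^ (d * t) := by
    intro t
    induction t with
    | zero => intro x; simp
    | succ t IH =>
      intro x
      rw [pow_succ, AlgEquiv.mul_apply, IH (σ x), hσ x, ← pow_mul]
      congr 1
      rw [← pow_add]
      congr 1
      ring
  -- fixed points of σ
  have hfix : ∀ x : K, σ x = x → ∃ lam : F, x = algebraMap F K lam := by
    intro x hx
    rw [hσ] at hx
    obtain ⟨xx, yy, hxxpos, hbez⟩ := bezout_nat m d e hd hm he1
    have h1 : x ^ 2 ^ (d * xx) = x := pow_cycle x d hx xx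
    rw [hbez] at h1
    have h2 : x ^ 2 ^ (m * yy) = x := pow_cycle x m (hexpK x) yy
    have h3 : x ^ 2 ^ (e + m * yy) = (x ^ 2 ^ (m * yy)) ^ 2 ^ e := by
      rw [← pow_mul, ← pow_add]
      congr 1
      ring
    rw [h3, h2] at h1
    exact fixed_in_base he hF x h1
  -- trace invariance
  have hTrK : ∀ (ψ : K ≃ₐ[F] K) (z : K), Algebra.trace F K (ψ z) = Algebra.trace F K z :=
    fun ψ z => Algebra.trace_eq_of_algEquiv ψ z
  have hTtr : ∀ z : K,
      Algebra.trace (ZMod 2) F (Algebra.trace F K z) = Algebra.trace (ZMod 2) K z :=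
    fun z => Algebra.trace_trace z
  have hTinv : ∀ (ψ : K ≃ₐ[F] K) (z : K),
      Algebra.trace (ZMod 2) K (ψ z) = Algebra.trace (ZMod 2) K z := fun ψ z => by
    rw [← hTtr, ← hTtr, hTrK ψ z]
  -- nondegeneracy
  have hTnd : ∀ z : K, (∀ x : K, Algebra.trace (ZMod 2) K (x * z) = 0) → z = 0 := by
    intro z hz
    apply (traceForm_nondegenerate (ZMod 2) K).1 z
    intro x
    rw [Algebra.traceForm_apply, mul_comm]
    exact hz x
  have hTndF : ∀ z : K, (∀ x : K, Algebra.trace F K (z * x) = 0) → z = 0 := by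
    intro z hz
    apply (traceForm_nondegenerate F K).1 z
    intro x
    rw [Algebra.traceForm_apply]
    exact hz x
  -- the function f and the linearized polynomial L
  set f : K → ZMod 2 := fun x => Algebra.trace (ZMod 2) F (Q x) with hfdef
  set Llin : K →ₗ[F] K := ∑ j : Fin k,
      (((σ ^ (j : ℕ)).symm.toLinearMap).comp ((Algebra.lmul F K) (a j))
        + ((Algebra.lmul F K) (a j)).comp (σ ^ (j : ℕ)).toLinearMap) with hLdef
  have hLapp : ∀ u : K,
      Llin u = ∑ j : Fin k, ((σ ^ (j : ℕ)).symm (a j * u) + a j * (σ ^ (j : ℕ)) u) := by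
    intro u
    rw [hLdef, LinearMap.sum_apply]
    refine Finset.sum_congr rfl fun j _ => ?_
    simp [Algebra.coe_lmul_eq_mul]
  -- the fundamental quadratic identity
  have hmain : ∀ x u : K,
      f (x + u) = f x + f u + Algebra.trace (ZMod 2) K (x * Llin u) := by
    intro x u
    have hfrob : ∀ (j : Fin k) (z : K), z ^ 2 ^ ((j : ℕ) * d) = (σ ^ (j : ℕ)) z := by
      intro j z
      rw [hσpow, Nat.mul_comm]
    have hQexp : Q (x + u) = Q x + Q u
        + ∑ j : Fin k, (Algebra.trace F K (a j * ((σ ^ (j : ℕ)) x * u))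
            + Algebra.trace F K (a j * (x * (σ ^ (j : ℕ)) u))) := by
      rw [hQ (x + u), hQ x, hQ u, ← Finset.sum_add_distrib, ← Finset.sum_add_distrib]
      refine Finset.sum_congr rfl fun j _ => ?_
      by_cases hj : (j : ℕ) = 0
      · rw [if_pos hj, if_pos hj, if_pos hj]
        have h0 : (σ ^ (j : ℕ)) = (1 : K ≃ₐ[F] K) := by rw [hj, pow_zero]
        rw [h0]
        show Algebra.trace F K (a j * (x + u))
          = Algebra.trace F K (a j * x) + Algebra.trace F K (a j * u)
            + (Algebra.trace F K (a j * (x * u)) + Algebra.trace F K (a j * (x * u)))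
        rw [CharTwo.add_self_eq_zero, add_zero, mul_add, map_add]
      · rw [if_neg hj, if_neg hj, if_neg hj]
        have hexp1 : (x + u) ^ (2 ^ ((j : ℕ) * d) + 1)
            = x ^ (2 ^ ((j : ℕ) * d) + 1) + u ^ (2 ^ ((j : ℕ) * d) + 1)
              + ((σ ^ (j : ℕ)) x * u + x * (σ ^ (j : ℕ)) u) := by
          rw [pow_succ, pow_succ, pow_succ, hadd_pow, ← hfrob j x, ← hfrob j u]
          ring
        rw [hexp1, mul_add, mul_add, map_add, map_add, mul_add, map_add]
    show Algebra.trace (ZMod 2) F (Q (x + u)) = _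
    rw [hQexp, map_add, map_add]
    have hterm : ∀ j : Fin k,
        Algebra.trace (ZMod 2) F (Algebra.trace F K (a j * ((σ ^ (j : ℕ)) x * u))
          + Algebra.trace F K (a j * (x * (σ ^ (j : ℕ)) u)))
        = Algebra.trace (ZMod 2) K (x * ((σ ^ (j : ℕ)).symm (a j * u) + a j * (σ ^ (j : ℕ)) u)) := by
      intro j
      rw [map_add]
      have h1 : Algebra.trace (ZMod 2) F (Algebra.trace F K (a j * ((σ ^ (j : ℕ)) x * u)))
          = Algebra.trace (ZMod 2) K (x * (σ ^ (j : ℕ)).symm (a j * u)) := by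
        rw [hTtr]
        have heq : (σ ^ (j : ℕ)).symm (a j * ((σ ^ (j : ℕ)) x * u))
            = x * (σ ^ (j : ℕ)).symm (a j * u) := by
          rw [map_mul, map_mul, AlgEquiv.symm_apply_apply, map_mul]
          ring
        rw [← heq, hTinv]
      have h2 : Algebra.trace (ZMod 2) F (Algebra.trace F K (a j * (x * (σ ^ (j : ℕ)) u)))
          = Algebra.trace (ZMod 2) K (x * (a j * (σ ^ (j : ℕ)) u)) := by
        rw [hTtr]
        congr 1
        ring
      rw [h1, h2, mul_add, map_add]
    rw [map_sum, Finset.sum_congr rfl (fun j _ => hterm j), hLapp, Finset.mul_sum, map_sum]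
  have hf0 : f 0 = 0 := by
    have hQ0 : Q 0 = 0 := by
      rw [hQ 0]
      refine Finset.sum_eq_zero fun j _ => ?_
      split_ifs
      · rw [mul_zero, map_zero]
      · rw [zero_pow (Nat.succ_ne_zero _), mul_zero, map_zero]
    show Algebra.trace (ZMod 2) F (Q 0) = 0
    rw [hQ0, map_zero]
  have hmain2 : ∀ x u : K,
      f x + f (x + u) = f u + Algebra.trace (ZMod 2) K (x * Llin u) := by
    intro x u
    rw [hmain x u]
    have h2 : f x + f x = 0 := CharTwo.add_self_eq_zero (f x)
    linear_combination h2
  -- reduction of the DC sum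
  have h2mne : (2 : ℕ) ^ m - 1 ≠ 0 := by
    have := Nat.one_lt_two_pow_iff.mpr (by omega : m ≠ 0)
    omega
  have hπne : π ≠ 0 := by
    intro h
    have h1 : π ^ (2 ^ m - 1) = 1 := by rw [← hπ]; exact pow_orderOf_eq_one π
    rw [h, zero_pow h2mne] at h1
    exact zero_ne_one h1
  have hginj : Function.Injective (fun i : Fin (2 ^ m - 1) => π⁻¹ ^ (i : ℕ)) := by
    intro i j hij
    have hij' : π ^ (i : ℕ) = π ^ (j : ℕ) := by
      have h1 : π⁻¹ ^ (i : ℕ) = π⁻¹ ^ (j : ℕ) := hij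
      rw [inv_pow, inv_pow, inv_inj] at h1
      exact h1
    set πu : Kˣ := Units.mk0 π hπne with hπu
    have hiju : πu ^ (i : ℕ) = πu ^ (j : ℕ) := by
      ext
      push_cast
      exact hij'
    have hordu : orderOf πu = 2 ^ m - 1 := by
      rw [← hπ]
      exact (orderOf_units (y := πu)).symm
    have hmod := pow_eq_pow_iff_modEq.mp hiju
    rw [hordu] at hmod
    unfold Nat.ModEq at hmod
    rw [Nat.mod_eq_of_lt i.isLt, Nat.mod_eq_of_lt j.isLt] at hmod
    exact Fin.ext hmod
  have himg : Finset.image (fun i : Fin (2 ^ m - 1) => π⁻¹ ^ (i : ℕ)) Finset.univ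
      = Finset.univ.erase (0 : K) := by
    apply Finset.eq_of_subset_of_card_le
    · intro x hx
      obtain ⟨i, _, rfl⟩ := Finset.mem_image.mp hx
      exact Finset.mem_erase.mpr ⟨pow_ne_zero _ (inv_ne_zero hπne), Finset.mem_univ _⟩
    · rw [Finset.card_erase_of_mem (Finset.mem_univ 0),
        Finset.card_image_of_injective _ hginj]
      simp [hK]
  set Ssum : ℤ := ∑ x : K, (-1 : ℤ) ^ (f x).val with hSsumdef
  have hDC : (∑ i : Fin (2 ^ m - 1), (-1 : ℤ) ^ (c i).val) = Ssum - 1 := by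
    have h1 : (∑ i : Fin (2 ^ m - 1), (-1 : ℤ) ^ (c i).val)
        = ∑ x ∈ Finset.univ.erase (0 : K), (-1 : ℤ) ^ (f x).val := by
      rw [← himg, Finset.sum_image (fun i _ j _ h => hginj h)]
      exact Finset.sum_congr rfl fun i _ => by rw [hc i]
    have h2 : Ssum = (-1 : ℤ) ^ (f 0).val
        + ∑ x ∈ Finset.univ.erase (0 : K), (-1 : ℤ) ^ (f x).val :=
      (Finset.add_sum_erase _ _ (Finset.mem_univ 0)).symm
    rw [h1, h2, hf0]
    norm_num
  -- the square of the character sum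
  have hchi_add : ∀ s t : ZMod 2,
      (-1 : ℤ) ^ ((s + t).val) = (-1 : ℤ) ^ s.val * (-1 : ℤ) ^ t.val := by
    intro s t; fin_cases s <;> fin_cases t <;> rfl
  have hS2 : Ssum ^ 2
      = 2 ^ m * ∑ u : K, (if Llin u = 0 then (-1 : ℤ) ^ (f u).val else 0) := by
    rw [sq, hSsumdef, Finset.sum_mul_sum]
    have hout : ∀ x : K, (∑ y : K, (-1 : ℤ) ^ (f x).val * (-1 : ℤ) ^ (f y).val)
        = ∑ u : K, (-1 : ℤ) ^ (f u).val
            * (-1 : ℤ) ^ (Algebra.trace (ZMod 2) K (x * Llin u)).val := by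
      intro x
      rw [← Fintype.sum_equiv (Equiv.addLeft x)
        (fun u => (-1 : ℤ) ^ (f x).val * (-1 : ℤ) ^ (f (x + u)).val)
        (fun y => (-1 : ℤ) ^ (f x).val * (-1 : ℤ) ^ (f y).val) (fun u => rfl)]
      refine Finset.sum_congr rfl fun u _ => ?_
      rw [← hchi_add, hmain2 x u, hchi_add]
    rw [Finset.sum_congr rfl (fun x _ => hout x), Finset.sum_comm]
    rw [Finset.sum_congr rfl (fun u _ => (Finset.mul_sum _ _ _).symm)]
    have hin : ∀ u : K,
        (∑ x : K, (-1 : ℤ) ^ (Algebra.trace (ZMod 2) K (x * Llin u)).val)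
          = if Llin u = 0 then (2 : ℤ) ^ m else 0 := by
      intro u
      set φu : K →+ ZMod 2 :=
        { toFun := fun x => Algebra.trace (ZMod 2) K (x * Llin u)
          map_zero' := by
            show Algebra.trace (ZMod 2) K (0 * Llin u) = 0
            rw [zero_mul, map_zero]
          map_add' := fun x y => by
            show Algebra.trace (ZMod 2) K ((x + y) * Llin u)
              = Algebra.trace (ZMod 2) K (x * Llin u) + Algebra.trace (ZMod 2) K (y * Llin u)
            rw [add_mul, map_add] } with hφu
      have hcs := char_sum φu
      have hiff : (∀ x, φu x = 0) ↔ Llin u = 0 := by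
        constructor
        · intro h
          exact hTnd (Llin u) h
        · intro h x
          show Algebra.trace (ZMod 2) K (x * Llin u) = 0
          rw [h, mul_zero, map_zero]
      rw [hK] at hcs
      have hval : (∑ x : K, (-1 : ℤ) ^ (Algebra.trace (ZMod 2) K (x * Llin u)).val)
          = ∑ x : K, (-1 : ℤ) ^ (φu x).val := rfl
      rw [hval, hcs, if_congr hiff rfl rfl]
      by_cases h : Llin u = 0
      · rw [if_pos h, if_pos h]
        norm_cast
      · rw [if_neg h, if_neg h]
    rw [Finset.sum_congr rfl (fun u _ => by rw [hin u])]
    rw [Finset.mul_sum]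
    refine Finset.sum_congr rfl fun u _ => ?_
    split_ifs with h
    · ring
    · ring
  have hWsum : (∑ u : K, (if Llin u = 0 then (-1 : ℤ) ^ (f u).val else 0))
      = ∑ u : LinearMap.ker Llin, (-1 : ℤ) ^ (f u.val).val := by
    rw [← Finset.sum_filter]
    exact Finset.sum_subtype _ (fun u => by simp [LinearMap.mem_ker]) _
  -- main case split
  by_cases hSz : Ssum = 0
  · left
    rw [hDC, hSz]
    ring
  · right
    -- f vanishes on the kernel of L
    have hfW : ∀ u : K, Llin u = 0 → f u = 0 := by
      by_contra hcon
      push_neg at hcon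
      obtain ⟨u0, hu0ker, hu0f⟩ := hcon
      set φW : (LinearMap.ker Llin) →+ ZMod 2 :=
        { toFun := fun u => f u.val
          map_zero' := hf0
          map_add' := fun u v => by
            have h1 := hmain u.val v.val
            have h2 : Llin v.val = 0 := LinearMap.mem_ker.mp v.2
            rw [h2, mul_zero, map_zero, add_zero] at h1
            exact h1 } with hφW
      have hcs := char_sum φW
      rw [if_neg (by
        push_neg
        exact ⟨⟨u0, LinearMap.mem_ker.mpr hu0ker⟩, hu0f⟩)] at hcs
      have hz2 : Ssum ^ 2 = 0 := by
        rw [hS2, hWsum]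
        have : (∑ u : LinearMap.ker Llin, (-1 : ℤ) ^ (f u.val).val) = 0 := hcs
        rw [this, mul_zero]
      exact hSz (by
        have := sq_eq_zero_iff.mp hz2
        exact this)
    have hfWsum : (∑ u : LinearMap.ker Llin, (-1 : ℤ) ^ (f u.val).val)
        = (Fintype.card (LinearMap.ker Llin) : ℤ) := by
      have h1 : ∀ u : LinearMap.ker Llin, (-1 : ℤ) ^ (f u.val).val = 1 := by
        intro u
        rw [hfW u.val (LinearMap.mem_ker.mp u.2)]
        rfl
      calc (∑ u : LinearMap.ker Llin, (-1 : ℤ) ^ (f u.val).val)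
          = ∑ _u : LinearMap.ker Llin, (1 : ℤ) := Finset.sum_congr rfl (fun u _ => h1 u)
        _ = (Fintype.card (LinearMap.ker Llin) : ℤ) := by
            rw [Finset.sum_const, Finset.card_univ]
            simp
    have hSsq : Ssum ^ 2 = 2 ^ m * (Fintype.card (LinearMap.ker Llin) : ℤ) := by
      rw [hS2, hWsum, hfWsum]
    -- some coefficient a_j (j ≠ 0) is nonzero
    have hLne : ¬ ∀ j : Fin k, (j : ℕ) ≠ 0 → a j = 0 := by
      intro hall
      have hL0 : ∀ u : K, Llin u = 0 := by
        intro u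
        rw [hLapp]
        refine Finset.sum_eq_zero fun j _ => ?_
        by_cases hj : (j : ℕ) = 0
        · rw [hj, pow_zero]
          show (1 : K ≃ₐ[F] K).symm (a j * u) + a j * (1 : K ≃ₐ[F] K) u = 0
          have hsymm1 : (1 : K ≃ₐ[F] K).symm = 1 := rfl
          rw [hsymm1]
          show (a j * u) + a j * u = 0
          have : (2 : K) = 0 := by
            have := CharP.cast_eq_zero K 2
            exact_mod_cast this
          calc a j * u + a j * u = 2 * (a j * u) := by ring
            _ = 0 := by rw [this, zero_mul]
        · rw [hall j hj, zero_mul, map_zero, zero_mul, add_zero]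
      apply hc0
      funext i
      show c i = 0
      rw [hc i]
      exact hfW _ (hL0 _)
    push_neg at hLne
    obtain ⟨j0, hj0ne, hj0a⟩ := hLne
    -- the coefficient sequence of σ^{k-1} ∘ L
    set Ecoef : ℕ → K := fun i =>
      if h1 : i < k - 1 then (σ ^ i) (a ⟨k - 1 - i, by omega⟩)
      else if h2 : i ≤ 2 * k - 2 ∧ i ≠ k - 1 then (σ ^ (k - 1)) (a ⟨i - (k - 1), by omega⟩)
      else 0 with hEdef
    have hrepr : skewOp σ Ecoef (2 * k - 2) = ((σ ^ (k - 1)).toLinearMap).comp Llin := by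
      have hk' : k - 1 + 1 = k := by omega
      set A : ℕ → K := fun j => if h : j < k then a ⟨j, h⟩ else 0 with hA
      apply LinearMap.ext
      intro u
      rw [LinearMap.comp_apply, AlgEquiv.toLinearMap_apply, skewOp_apply]
      have hcomp1 : ∀ j : Fin k, (σ ^ (k - 1)) ((σ ^ (j : ℕ)).symm (a j * u))
          = (σ ^ (k - 1 - (j : ℕ))) (a j * u) := by
        intro j
        have hsp : σ ^ (k - 1) = σ ^ (k - 1 - (j : ℕ)) * σ ^ (j : ℕ) := by
          rw [← pow_add]
          congr 1
          have := j.isLt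
          omega
        rw [hsp, AlgEquiv.mul_apply, AlgEquiv.apply_symm_apply]
      have hAj : ∀ j : Fin k, A (j : ℕ) = a j := by
        intro j
        simp only [hA]
        rw [dif_pos j.isLt]
      have hRHS : (σ ^ (k - 1)) (Llin u)
          = ∑ j ∈ Finset.range k, ((σ ^ (k - 1 - j)) (A j) * (σ ^ (k - 1 - j)) u
              + (σ ^ (k - 1)) (A j) * (σ ^ (k - 1 + j)) u) := by
        rw [hLapp, map_sum]
        rw [← Fin.sum_univ_eq_sum_range (fun j => (σ ^ (k - 1 - j)) (A j) * (σ ^ (k - 1 - j)) u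
              + (σ ^ (k - 1)) (A j) * (σ ^ (k - 1 + j)) u) k]
        refine Finset.sum_congr rfl fun j _ => ?_
        rw [map_add, hcomp1 j, map_mul]
        have h2 : (σ ^ (k - 1)) (a j * (σ ^ (j : ℕ)) u)
            = (σ ^ (k - 1)) (a j) * (σ ^ (k - 1 + (j : ℕ))) u := by
          rw [map_mul]
          congr 1
          rw [pow_add, AlgEquiv.mul_apply]
        rw [h2, hAj j]
      have hsplitR : (∑ j ∈ Finset.range k, ((σ ^ (k - 1 - j)) (A j) * (σ ^ (k - 1 - j)) u
              + (σ ^ (k - 1)) (A j) * (σ ^ (k - 1 + j)) u))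
          = (∑ j ∈ Finset.range k, (σ ^ (k - 1 - j)) (A j) * (σ ^ (k - 1 - j)) u)
            + ∑ j ∈ Finset.range k, (σ ^ (k - 1)) (A j) * (σ ^ (k - 1 + j)) u :=
        Finset.sum_add_distrib
      have hg1 : (∑ j ∈ Finset.range k, (σ ^ (k - 1 - j)) (A j) * (σ ^ (k - 1 - j)) u)
          = ∑ i ∈ Finset.range k, (σ ^ i) (A (k - 1 - i)) * (σ ^ i) u := by
        rw [← Finset.sum_range_reflect
          (fun j => (σ ^ (k - 1 - j)) (A j) * (σ ^ (k - 1 - j)) u) k]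
        refine Finset.sum_congr rfl fun i hi => ?_
        rw [Finset.mem_range] at hi
        have h1 : k - 1 - (k - 1 - i) = i := by omega
        rw [h1]
      have hr : Finset.range k = Finset.range (k - 1 + 1) := by rw [hk']
      have hg1' : (∑ i ∈ Finset.range k, (σ ^ i) (A (k - 1 - i)) * (σ ^ i) u)
          = (∑ i ∈ Finset.range (k - 1), (σ ^ i) (A (k - 1 - i)) * (σ ^ i) u)
            + (σ ^ (k - 1)) (A 0) * (σ ^ (k - 1)) u := by
        rw [hr, Finset.sum_range_succ]
        congr 2
        rw [Nat.sub_self]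
      have hg2' : (∑ j ∈ Finset.range k, (σ ^ (k - 1)) (A j) * (σ ^ (k - 1 + j)) u)
          = (σ ^ (k - 1)) (A 0) * (σ ^ (k - 1)) u
            + ∑ j ∈ Finset.range (k - 1), (σ ^ (k - 1)) (A (j + 1)) * (σ ^ (k + j)) u := by
        rw [hr, Finset.sum_range_succ']
        rw [add_comm]
        congr 1
        refine Finset.sum_congr rfl fun j hj => ?_
        have hje : k - 1 + (j + 1) = k + j := by omega
        rw [hje]
      have hLs : (∑ i ∈ Finset.range (2 * k - 2 + 1), Ecoef i * (σ ^ i) u)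
          = (∑ i ∈ Finset.range (k - 1), (σ ^ i) (A (k - 1 - i)) * (σ ^ i) u)
            + ∑ j ∈ Finset.range (k - 1), (σ ^ (k - 1)) (A (j + 1)) * (σ ^ (k + j)) u := by
        have h2k : 2 * k - 2 + 1 = 2 * k - 1 := by omega
        rw [h2k, show Finset.range (2 * k - 1) = Finset.Ico 0 (2 * k - 1)
            from Finset.range_eq_Ico (2 * k - 1),
          ← Finset.sum_Ico_consecutive _ (Nat.zero_le k) (by omega : k ≤ 2 * k - 1)]
        congr 1
        · rw [show Finset.Ico 0 k = Finset.range k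
              from (Finset.range_eq_Ico k).symm,
            hr, Finset.sum_range_succ]
          have hzero : Ecoef (k - 1) = 0 := by
            simp only [hEdef]
            rw [dif_neg (by omega), dif_neg (by
              intro hcon
              exact hcon.2 rfl)]
          rw [hzero, zero_mul, add_zero]
          refine Finset.sum_congr rfl fun i hi => ?_
          rw [Finset.mem_range] at hi
          simp only [hEdef]
          rw [dif_pos (by omega : i < k - 1)]
          have hAv : A (k - 1 - i) = a ⟨k - 1 - i, by omega⟩ := by
            simp only [hA]
            rw [dif_pos (by omega : k - 1 - i < k)]
          rw [hAv]
        · rw [Finset.sum_Ico_eq_sum_range]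
          have hnm : 2 * k - 1 - k = k - 1 := by omega
          rw [hnm]
          refine Finset.sum_congr rfl fun j hj => ?_
          rw [Finset.mem_range] at hj
          simp only [hEdef]
          rw [dif_neg (by omega), dif_pos (⟨by omega, by omega⟩ :
            (k + j) ≤ 2 * k - 2 ∧ (k + j) ≠ k - 1)]
          have hAv : A (j + 1) = a ⟨k + j - (k - 1), by omega⟩ := by
            simp only [hA]
            rw [dif_pos (by omega : j + 1 < k)]
            congr 1
            exact Fin.ext (by simp only [Fin.val_mk]; omega)
          rw [hAv]
      rw [hLs, hRHS, hsplitR, hg1, hg1', hg2']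
      have hX : (σ ^ (k - 1)) (A 0) * (σ ^ (k - 1)) u
          + (σ ^ (k - 1)) (A 0) * (σ ^ (k - 1)) u = 0 := CharTwo.add_self_eq_zero _
      linear_combination -hX
    have hEne : ¬ ∀ i ≤ 2 * k - 2, Ecoef i = 0 := by
      intro hall
      have hj0lt := j0.isLt
      have hj0pos : 0 < (j0 : ℕ) := Nat.pos_of_ne_zero hj0ne
      have hi0 : (k - 1 + (j0 : ℕ)) ≤ 2 * k - 2 := by omega
      have hz := hall _ hi0
      simp only [hEdef] at hz
      rw [dif_neg (by omega : ¬ (k - 1 + (j0 : ℕ) < k - 1)),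
        dif_pos (⟨by omega, by omega⟩ : (k - 1 + (j0:ℕ)) ≤ 2 * k - 2 ∧ (k - 1 + (j0:ℕ)) ≠ k - 1)] at hz
      have hidx : (⟨k - 1 + (j0 : ℕ) - (k - 1), by omega⟩ : Fin k) = j0 :=
        Fin.ext (by simp only [Fin.val_mk]; omega)
      rw [hidx] at hz
      exact hj0a ((σ ^ (k - 1)).injective (by rw [hz, map_zero]))
    have hkerbound : finrank F (LinearMap.ker Llin) ≤ 2 * k - 2 := by
      have hker_eq : LinearMap.ker (skewOp σ Ecoef (2 * k - 2)) = LinearMap.ker Llin := by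
        rw [hrepr]
        ext u
        simp only [LinearMap.mem_ker, LinearMap.comp_apply, AlgEquiv.toLinearMap_apply]
        constructor
        · intro h
          have := (σ ^ (k - 1)).injective (by rw [h, map_zero] : (σ ^ (k-1)) (Llin u) = (σ ^ (k-1)) 0)
          exact this
        · intro h
          rw [h, map_zero]
      have hb := skew_kernel_bound σ hfix (2 * k - 2) Ecoef hEne
      rwa [hker_eq] at hb
    -- the alternating bilinear form and parity of the kernel dimension
    set Bform : K →ₗ[F] K →ₗ[F] F := LinearMap.comp (M₃ := K →ₗ[F] F) (Algebra.traceForm F K) Llin with hBdef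
    have hBapp : ∀ u v : K, Bform u v = Algebra.trace F K (Llin u * v) := by
      intro u v
      rw [hBdef]
      simp [Algebra.traceForm_apply]
    have hBalt : ∀ u : K, Bform u u = 0 := by
      intro u
      rw [hBapp, hLapp, Finset.sum_mul, map_sum]
      refine Finset.sum_eq_zero fun j _ => ?_
      rw [add_mul, map_add]
      have h1 : Algebra.trace F K ((σ ^ (j : ℕ)).symm (a j * u) * u)
          = Algebra.trace F K (a j * (σ ^ (j : ℕ)) u * u) := by
        rw [← hTrK (σ ^ (j : ℕ)) ((σ ^ (j : ℕ)).symm (a j * u) * u)]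
        rw [map_mul, AlgEquiv.apply_symm_apply]
        congr 1
        ring
      rw [h1]
      have : (2 : F) = 0 := by
        have := CharP.cast_eq_zero F 2
        exact_mod_cast this
      calc Algebra.trace F K (a j * (σ ^ (j:ℕ)) u * u) + Algebra.trace F K (a j * (σ ^ (j:ℕ)) u * u)
          = 2 * Algebra.trace F K (a j * (σ ^ (j:ℕ)) u * u) := by ring
        _ = 0 := by rw [this, zero_mul]
    have hkerB : LinearMap.ker Bform = LinearMap.ker Llin := by
      ext u
      simp only [LinearMap.mem_ker]
      constructor
      · intro h
        apply hTndF (Llin u)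
        intro x
        have hx := LinearMap.congr_fun h x
        rw [LinearMap.zero_apply] at hx
        rw [← hBapp u x]
        exact hx
      · intro h
        ext v
        rw [LinearMap.zero_apply, hBapp, h, zero_mul, map_zero]
    have hEvenKer : Even (finrank F K - finrank F (LinearMap.ker Llin)) := by
      have halt := alt_even_aux F (finrank F K) K rfl Bform hBalt
      rwa [hkerB] at halt
    -- numerics
    set w : ℕ := finrank F (LinearMap.ker Llin) with hwdef
    set n0 : ℕ := finrank F K with hn0def
    have hn0m : e * n0 = m := by
      have h1 : (2 : ℕ) ^ m = (2 ^ e) ^ n0 := by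
        rw [← hF, ← hK]
        exact card_eq_pow_finrank
      rw [← pow_mul] at h1
      exact (Nat.pow_right_injective (le_refl 2) h1).symm
    have hmodd : Odd n0 := by
      by_contra heven
      rw [Nat.not_odd_iff_even] at heven
      obtain ⟨t, ht⟩ := heven
      have h2e : 2 * e ∣ m := ⟨t, by rw [← hn0m, ht]; ring⟩
      have h2d : 2 * e ∣ 2 * d := mul_dvd_mul_left 2 hedvd_d
      have hdvd : 2 * e ∣ Nat.gcd m (2 * d) := Nat.dvd_gcd h2e h2d
      rw [← he2] at hdvd
      have := Nat.le_of_dvd he hdvd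
      omega
    have hwle : w ≤ n0 := Submodule.finrank_le _
    have hwodd : Odd w := by
      obtain ⟨p, hp⟩ := hEvenKer
      obtain ⟨q, hq⟩ := hmodd
      exact ⟨q - p, by omega⟩
    obtain ⟨jj, hjj⟩ := hwodd
    have hjle : jj ≤ k - 2 := by omega
    have hcardW : (Fintype.card (LinearMap.ker Llin) : ℤ) = 2 ^ (e * w) := by
      have hcw := card_eq_pow_finrank (K := F) (V := LinearMap.ker Llin)
      rw [hF] at hcw
      rw [hcw, ← pow_mul]
      norm_cast
    have hSsq2 : Ssum ^ 2 = 2 ^ (m + e * w) := by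
      rw [hSsq, hcardW, ← pow_add]
    obtain ⟨q, hq⟩ := hmodd
    have hme2 : m + e = 2 * (e * (q + 1)) := by rw [← hn0m, hq]; ring
    have hdiv2 : (m + e) / 2 = e * (q + 1) := by omega
    have hexp2 : m + e * w = 2 * ((m + e) / 2 + jj * e) := by
      rw [hdiv2, hjj, ← hn0m, hq]
      ring
    have hSpm : Ssum = 2 ^ ((m + e) / 2 + jj * e) ∨ Ssum = -(2 ^ ((m + e) / 2 + jj * e)) := by
      have hsq' : Ssum ^ 2 = ((2 : ℤ) ^ ((m + e) / 2 + jj * e)) ^ 2 := by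
        rw [hSsq2, ← pow_mul, hexp2]
        congr 1
        ring
      have h1 : (Ssum - 2 ^ ((m + e) / 2 + jj * e)) * (Ssum + 2 ^ ((m + e) / 2 + jj * e)) = 0 := by
        linear_combination hsq'
      rcases mul_eq_zero.mp h1 with h | h
      · left; linarith
      · right; linarith
    refine ⟨jj, hjle, ?_⟩
    rcases hSpm with h | h
    · left
      rw [hDC, h]
      ring
    · right
      rw [hDC, h]
      ring
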